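/- Let h₂(y) = −y·log₂ y − (1−y)·log₂(1−y) (with the convention 0·log₂ 0 = 0) denote the binary entropy function. For every x ∈ (0, 2^{−1/2}] and every y ∈ [0, 1/2]: if h₂(y) ≥ x, then y ≥ x/(8·log₂(1/x)). -/

import Mathlib

/-- The binary entropy function `h₂(y) = -y·log₂ y - (1-y)·log₂(1-y)`
(with the convention `0·log₂ 0 = 0`, which holds automatically since `Real.logb 2 0 = 0`). -/
noncomputable def binEnt (y : ℝ) : ℝ := -(y * Real.logb 2 y) - (1 - y) * Real.logb 2 (1 - y)

set_option maxHeartbeats 1000000 in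
theorem stmt16 (x : ℝ) (hx : x ∈ Set.Ioc (0:ℝ) ((2:ℝ) ^ (-(1/2 : ℝ))))
    (y : ℝ) (hy : y ∈ Set.Icc (0:ℝ) (1/2)) (h : x ≤ binEnt y) :
    x / (8 * Real.logb 2 (1 / x)) ≤ y := by
  obtain ⟨hx0, hx1⟩ := hx
  obtain ⟨hy0, hy2⟩ := hy
  have hlog2 : (0:ℝ) < Real.log 2 := Real.log_pos (by norm_num)
  have hlog2a : 0.6931471803 < Real.log 2 := Real.log_two_gt_d9
  have hy0' : 0 < y := by
    rcases lt_or_eq_of_le hy0 with h' | h'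
    · exact h'
    · exfalso
      rw [← h'] at h
      simp [binEnt] at h
      linarith
  have hy1 : y < 1 := by linarith
  have h1y : 0 < 1 - y := by linarith
  set L : ℝ := Real.logb 2 (1/x) with hLdef
  have hLeq : L * Real.log 2 = - Real.log x := by
    rw [hLdef, Real.logb, div_mul_cancel₀ _ (ne_of_gt hlog2),
      Real.log_div one_ne_zero (ne_of_gt hx0), Real.log_one]
    ring
  have hlx : Real.log x ≤ -(1/2) * Real.log 2 := by
    have h' := Real.log_le_log hx0 hx1
    rwa [Real.log_rpow (by norm_num : (0:ℝ) < 2)] at h'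
  have hL : (1/2:ℝ) ≤ L := by nlinarith
  have hL0 : (0:ℝ) < L := by linarith
  set t : ℝ := x / (8 * L) with htdef
  have ht0 : 0 < t := by positivity
  by_contra hcon
  push_neg at hcon
  have hx1' : x ≤ 1 := le_trans hx1 (by
    rw [← Real.rpow_zero (2:ℝ)]
    exact Real.rpow_le_rpow_of_exponent_le (by norm_num) (by norm_num))
  have ht1 : t < 1 := by
    rw [htdef, div_lt_one (by linarith)]
    linarith
  have h1 : x * Real.log 2 ≤ -(y * Real.log y) - (1-y) * Real.log (1-y) := by
    have hbe : binEnt y = (-(y * Real.log y) - (1-y) * Real.log (1-y)) / Real.log 2 := by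
      unfold binEnt
      rw [Real.logb, Real.logb]
      ring
    rw [hbe, le_div_iff₀ hlog2] at h
    linarith
  have h2 : -((1-y) * Real.log (1-y)) ≤ y := by
    have h' := Real.log_le_sub_one_of_pos (show (0:ℝ) < 1/(1-y) by positivity)
    rw [Real.log_div one_ne_zero (ne_of_gt h1y), Real.log_one] at h'
    have h'' : (1/(1-y) - 1) * (1-y) = y := by field_simp; ring
    nlinarith
  have h3 : -(y * Real.log y) ≤ t - y - y * Real.log t := by
    have h' := Real.log_le_sub_one_of_pos (show (0:ℝ) < t/y by positivity)
    rw [Real.log_div (ne_of_gt ht0) (ne_of_gt hy0')] at h'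
    have h'' : y * (t/y) = t := by field_simp
    nlinarith
  have h4 : - (y * Real.log t) ≤ -(t * Real.log t) := by
    have hlt : Real.log t < 0 := Real.log_neg ht0 ht1
    nlinarith
  have hlt8 : Real.log t = Real.log x - Real.log 8 - Real.log L := by
    rw [htdef, Real.log_div (ne_of_gt hx0) (by positivity),
      Real.log_mul (by norm_num) (ne_of_gt hL0)]
    ring
  have hlog8 : Real.log 8 = 3 * Real.log 2 := by
    rw [show (8:ℝ) = 2^3 by norm_num, Real.log_pow]
    push_cast; ring
  have hlogL : Real.log L ≤ 2 * L - 1 - Real.log 2 := by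
    have h' := Real.log_le_sub_one_of_pos (show (0:ℝ) < 2*L by linarith)
    rw [Real.log_mul (by norm_num) (ne_of_gt hL0)] at h'
    linarith
  have hchain : x * Real.log 2 ≤ t - t * Real.log t := by linarith
  have hteq : t * (8 * L) = x := by
    rw [htdef]; field_simp
  have hfin : t - t * Real.log t < x * Real.log 2 := by
    have hup : 1 - Real.log t ≤ 2*L + L * Real.log 2 + 2 * Real.log 2 := by
      rw [hlt8, hlog8]
      nlinarith
    have hkey : 2*L + L * Real.log 2 + 2 * Real.log 2 < 8 * L * Real.log 2 := by
      nlinarith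
    calc t - t * Real.log t = t * (1 - Real.log t) := by ring
    _ ≤ t * (2*L + L*Real.log 2 + 2*Real.log 2) :=
        mul_le_mul_of_nonneg_left hup (le_of_lt ht0)
    _ < t * (8*L*Real.log 2) := (mul_lt_mul_iff_right₀ ht0).mpr hkey
    _ = x * Real.log 2 := by rw [← hteq]; ring
  linarith
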